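/- For all natural numbers k ≥ 1 and real numbers R > 0 and 0 ≤ x < R, ∫_{-1}^{1} (1-s²)^{k-1} / (R² + x² + 2Rxs)^{2k-1} ds ≥ (√π · Γ(k)/Γ(k+1/2)) · R^{-(4k-2)}, with equality if and only if x = 0. -/

import Mathlib

open Real intervalIntegral Set


lemma cval (j : ℕ) : (∫ s in (-1:ℝ)..1, (1 - s^2)^j) =
    Real.sqrt π * Real.Gamma (j+1) / Real.Gamma (j+1+1/2) := by
  induction j with
  | zero =>
    simp only [pow_zero, Nat.cast_zero, zero_add]
    rw [integral_const]
    have h32 : Real.Gamma (1+1/2) = (1/2) * Real.Gamma (1/2) := by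
      rw [show (1:ℝ)+1/2 = 1/2+1 by ring, Real.Gamma_add_one (by norm_num)]
    rw [Real.Gamma_one, h32, Real.Gamma_one_half_eq]
    have : Real.sqrt π ≠ 0 := by positivity
    field_simp
    ring
  | succ j ih =>
    -- FTC : ∫ d/ds (s * (1-s^2)^(j+1)) = 0
    have ftc : (∫ s in (-1:ℝ)..1, ((1-s^2)^(j+1) - 2*(j+1)*s^2*(1-s^2)^j)) = 0 := by
      have h : ∀ s ∈ Set.uIcc (-1:ℝ) 1, HasDerivAt (fun s : ℝ => s * (1-s^2)^(j+1))
          ((1-s^2)^(j+1) - 2*(j+1)*s^2*(1-s^2)^j) s := by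
        intro s _
        have h1 : HasDerivAt (fun s : ℝ => (1-s^2)^(j+1))
            ((j+1) * (1-s^2)^j * (-2*s)) s := by
          have := ((hasDerivAt_pow 2 s).const_sub 1).pow (j+1)
          simpa [Pi.pow_def, mul_comm, mul_assoc, mul_left_comm] using this
        have := (hasDerivAt_id s).mul h1
        refine this.congr_deriv ?_
        simp only [id_eq]
        ring
      rw [integral_eq_sub_of_hasDerivAt h ?_]
      · norm_num
      · apply Continuous.intervalIntegrable; continuity
    have hint : ∀ n : ℕ, IntervalIntegrable (fun s : ℝ => (1-s^2)^n) MeasureTheory.volume (-1) 1 := by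
      intro n; apply Continuous.intervalIntegrable; continuity
    have hsplit : (∫ s in (-1:ℝ)..1, (1-s^2)^(j+1))
        = (2*(j:ℝ)+2)/(2*(j:ℝ)+3) * ∫ s in (-1:ℝ)..1, (1-s^2)^j := by
      have e1 : ∀ s : ℝ, 2*((j:ℝ)+1)*s^2*(1-s^2)^j
          = (2*(j:ℝ)+2) * (1-s^2)^j - (2*(j:ℝ)+2) * (1-s^2)^(j+1) := by
        intro s; ring
      have h2 : (∫ s in (-1:ℝ)..1, ((1-s^2)^(j+1) - 2*(j+1)*s^2*(1-s^2)^j))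
          = (∫ s in (-1:ℝ)..1, (1-s^2)^(j+1)) - ((2*(j:ℝ)+2) * (∫ s in (-1:ℝ)..1, (1-s^2)^j)
            - (2*(j:ℝ)+2) * (∫ s in (-1:ℝ)..1, (1-s^2)^(j+1))) := by
        rw [integral_sub (hint (j+1)) (by
          apply Continuous.intervalIntegrable; continuity)]
        congr 1
        simp_rw [e1]
        rw [integral_sub ((hint j).const_mul _) ((hint (j+1)).const_mul _),
          integral_const_mul, integral_const_mul]
      rw [ftc] at h2
      have h3 : (2*(j:ℝ)+3) * (∫ s in (-1:ℝ)..1, (1-s^2)^(j+1))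
          = (2*(j:ℝ)+2) * ∫ s in (-1:ℝ)..1, (1-s^2)^j := by linarith
      have h4 : (2*(j:ℝ)+3) ≠ 0 := by positivity
      field_simp
      linarith
    rw [hsplit, ih]
    have hg1 : Real.Gamma ((j:ℝ)+1+1) = ((j:ℝ)+1) * Real.Gamma ((j:ℝ)+1) :=
      Real.Gamma_add_one (by positivity)
    have hg2 : Real.Gamma ((j:ℝ)+1+1+1/2) = ((j:ℝ)+1+1/2) * Real.Gamma ((j:ℝ)+1+1/2) := by
      rw [show (j:ℝ)+1+1+1/2 = ((j:ℝ)+1+1/2)+1 by ring, Real.Gamma_add_one (by positivity)]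
    have hgpos : 0 < Real.Gamma ((j:ℝ)+1+1/2) := Real.Gamma_pos_of_pos (by positivity)
    push_cast
    rw [hg1, hg2]
    have h5 : ((j:ℝ)+1+1/2) ≠ 0 := by positivity
    field_simp
    ring


lemma meanval (n : ℕ) (R x : ℝ) (hR : 0 < R) (hx : 0 < x) (hxR : x < R) :
    (∫ s in (-1:ℝ)..1, (1 - s^2)^n * (R^2 + x^2 + 2*R*x*s) ^ (-((n:ℝ)+1/2)))
      = (∫ s in (-1:ℝ)..1, (1 - s^2)^n) * ((R:ℝ) ^ (2*n+1))⁻¹ := by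
  have hRx : R*x ≠ 0 := by positivity
  have hm : (0:ℝ) < R^2 - x^2 := by nlinarith
  set m := R^2 - x^2 with hmdef
  set sm := Real.sqrt m with hsmdef
  have hsm : 0 < sm := Real.sqrt_pos.mpr hm
  have hsm2 : sm^2 = m := Real.sq_sqrt hm.le
  set E := fun z : ℝ => Real.sqrt (1+z^2) with hEdef
  have hE2 : ∀ z : ℝ, (E z)^2 = 1 + z^2 := fun z => Real.sq_sqrt (by positivity)
  have hEpos : ∀ z : ℝ, 0 < E z := fun z => Real.sqrt_pos.mpr (by positivity)
  have hzE : ∀ z : ℝ, 0 < z + E z := by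
    intro z
    rcases le_or_gt 0 z with h | h
    · have := hEpos z; linarith
    · have h1 : z^2 < (E z)^2 := by rw [hE2]; linarith
      have h2 : -z < E z := by
        have := (abs_lt_of_sq_lt_sq' h1 (hEpos z).le).1
        linarith
      linarith
  set S := x / sm with hSdef
  have hS : 0 < S := by positivity
  have hS2 : m * S^2 = x^2 := by
    rw [hSdef, div_pow, hsm2]; field_simp
  set φ := fun z : ℝ => (m*z^2 - x^2 + m*z*E z)/(R*x) with hφdef
  have key1 : ∀ z : ℝ, R^2 + x^2 + 2*R*x*(φ z) = m*(z+E z)^2 := by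
    intro z
    have he := hE2 z
    rw [hφdef]
    field_simp
    linear_combination (-m) * he + (-1) * hmdef
  have key2 : ∀ z : ℝ, 1 - (φ z)^2 = m/(R*x)^2 * ((x^2 - m*z^2)*(z+E z)^2) := by
    intro z
    have he := hE2 z
    rw [hφdef]
    field_simp
    linear_combination (-(x^2*m)) * he + (-(x^2)) * hmdef
  have hEd : ∀ z : ℝ, HasDerivAt E (z / E z) z := by
    intro z
    have h1 : HasDerivAt (fun z:ℝ => 1+z^2) (2*z) z := by
      simpa using ((hasDerivAt_pow 2 z).const_add 1)
    have h2 := (Real.hasDerivAt_sqrt (x := 1+z^2) (by positivity)).comp z h1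
    refine h2.congr_deriv ?_
    rw [hEdef]
    field_simp
  have hφd : ∀ z : ℝ, HasDerivAt φ (m/(R*x*E z)*(z+E z)^2) z := by
    intro z
    have hmz : HasDerivAt (fun z : ℝ => m*z) m z := by
      simpa using (hasDerivAt_id z).const_mul m
    have hmz2 : HasDerivAt (fun z : ℝ => m*z^2) (m*(2*z)) z := by
      simpa using (hasDerivAt_pow 2 z).const_mul m
    have h := ((hmz2.sub_const (x^2)).add (hmz.mul (hEd z))).div_const (R*x)
    refine h.congr_deriv ?_
    field_simp [ne_of_gt (hEpos z)]
    ring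
  -- key3 : rpow evaluation
  have key3 : ∀ z : ℝ, (m*(z+E z)^2) ^ (-((n:ℝ)+1/2)) = (sm * m^n * (z+E z)^(2*n+1))⁻¹ := by
    intro z
    have hw := hzE z
    have hb : (0:ℝ) < m*(z+E z)^2 := by positivity
    have h2 : m ^ (((n:ℝ))+1/2) = m^n * sm := by
      rw [Real.rpow_add hm, Real.rpow_natCast]
      congr 1
      rw [hsmdef, Real.sqrt_eq_rpow]
    have h3 : ((z+E z)^2 : ℝ) ^ (((n:ℝ))+1/2) = (z+E z)^(2*n+1) := by
      calc ((z+E z)^2 : ℝ) ^ (((n:ℝ))+1/2)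
          = ((z+E z) ^ (((2:ℕ)):ℝ)) ^ (((n:ℝ))+1/2) := by rw [Real.rpow_natCast]
        _ = (z+E z) ^ ((((2:ℕ)):ℝ) * (((n:ℝ))+1/2)) := by rw [← Real.rpow_mul hw.le]
        _ = (z+E z) ^ ((((2*n+1:ℕ)):ℝ)) := by congr 1; push_cast; ring
        _ = (z+E z)^(2*n+1) := Real.rpow_natCast _ _
    rw [Real.rpow_neg hb.le, Real.mul_rpow hm.le (sq_nonneg _), h2, h3]
    ring
  -- continuity
  have hEc : Continuous E := by
    rw [hEdef]; exact (continuous_const.add (continuous_pow 2)).sqrt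
  have hφ'c : Continuous (fun z : ℝ => m/(R*x*E z)*(z+E z)^2) := by
    apply Continuous.mul
    · exact continuous_const.div (continuous_const.mul hEc)
        (fun z => mul_ne_zero hRx (ne_of_gt (hEpos z)))
    · exact (continuous_id.add hEc).pow 2
  set g := fun s : ℝ => (1 - s^2)^n * (R^2 + x^2 + 2*R*x*s) ^ (-((n:ℝ)+1/2)) with hgdef
  have hgc : ContinuousOn g {s : ℝ | 0 < R^2 + x^2 + 2*R*x*s} := by
    apply ContinuousOn.mul
    · exact ((continuous_const.sub (continuous_pow 2)).pow n).continuousOn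
    · apply ContinuousOn.rpow_const
      · fun_prop
      · intro s hs; exact Or.inl (ne_of_gt hs)
  have himg : ContinuousOn g (φ '' Set.uIcc (-S) S) := by
    apply hgc.mono
    rintro s ⟨z, _, rfl⟩
    show 0 < R^2 + x^2 + 2*R*x*(φ z)
    rw [key1 z]
    exact mul_pos hm (pow_pos (hzE z) 2)
  -- endpoints
  have hEval : ∀ t : ℝ, 1 + t^2 = (R/sm)^2 → E t = R/sm := by
    intro t ht
    show Real.sqrt (1+t^2) = R/sm
    rw [ht, Real.sqrt_sq (by positivity)]
  have h1S : 1 + S^2 = (R/sm)^2 := by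
    rw [hSdef, div_pow, div_pow, hsm2]
    field_simp
    linear_combination hmdef
  have hES : E S = R/sm := hEval S h1S
  have hEnS : E (-S) = R/sm := hEval (-S) (by rw [neg_sq]; exact h1S)
  have e2 : m*S*(R/sm) = R*x := by
    rw [hSdef]
    field_simp
    linear_combination -hsm2
  have hφS : φ S = 1 := by
    show (m*S^2 - x^2 + m*S*E S)/(R*x) = 1
    rw [hES]
    rw [show m*S^2 - x^2 + m*S*(R/sm) = R*x by rw [hS2, e2]; ring]
    exact div_self hRx
  have hφnS : φ (-S) = -1 := by
    show (m*(-S)^2 - x^2 + m*(-S)*E (-S))/(R*x) = -1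
    rw [hEnS]
    rw [show m*(-S)^2 - x^2 + m*(-S)*(R/sm) = -(R*x) by
      rw [neg_sq, hS2]; linear_combination -e2]
    rw [neg_div, div_self hRx]
  -- substitution
  have hsubst := integral_comp_smul_deriv' (a := -S) (b := S)
    (f := φ) (f' := fun z => m/(R*x*E z)*(z+E z)^2) (g := g)
    (fun z _ => hφd z) hφ'c.continuousOn himg
  rw [hφS, hφnS] at hsubst
  set Cc := m/(R*x) * (m/(R*x)^2)^n * (sm*m^n)⁻¹ with hCc
  have hpt : ∀ z : ℝ, (m/(R*x*E z)*(z+E z)^2) • (g ∘ φ) z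
      = Cc * (x^2 - m*z^2)^n + Cc * ((x^2 - m*z^2)^n * (z / E z)) := by
    intro z
    have hw := hzE z
    have hE0 : E z ≠ 0 := ne_of_gt (hEpos z)
    have hw0 : z + E z ≠ 0 := ne_of_gt hw
    have h1 : (m/(R*x*E z)*(z+E z)^2) • (g ∘ φ) z
        = Cc * ((x^2 - m*z^2)^n * ((z + E z) / E z)) := by
      simp only [Function.comp_apply, smul_eq_mul, hgdef]
      rw [key2 z, key1 z, key3 z, hCc]
      rw [mul_pow (m/(R*x)^2) ((x^2-m*z^2)*(z+E z)^2) n,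
          mul_pow (x^2-m*z^2) ((z+E z)^2) n, ← pow_mul (z+E z) 2 n]
      generalize hww : z + E z = w at hw0 ⊢
      field_simp
      ring
    rw [h1]
    field_simp
    ring
  have hrw : (∫ z in (-S)..S, (fun z => m/(R*x*E z)*(z+E z)^2) z • (g ∘ φ) z)
      = ∫ z in (-S)..S, (Cc * (x^2 - m*z^2)^n + Cc * ((x^2-m*z^2)^n * (z/E z))) :=
    integral_congr (fun z _ => hpt z)
  have hi1 : IntervalIntegrable (fun z : ℝ => Cc * (x^2-m*z^2)^n)
      MeasureTheory.volume (-S) S := by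
    apply Continuous.intervalIntegrable
    exact continuous_const.mul ((continuous_const.sub (continuous_const.mul (continuous_pow 2))).pow n)
  have hi2 : IntervalIntegrable (fun z : ℝ => Cc * ((x^2-m*z^2)^n * (z/E z)))
      MeasureTheory.volume (-S) S := by
    apply Continuous.intervalIntegrable
    exact continuous_const.mul
      (((continuous_const.sub (continuous_const.mul (continuous_pow 2))).pow n).mul
        (continuous_id.div hEc (fun z => ne_of_gt (hEpos z))))
  have hodd : (∫ z in (-S)..S, Cc * ((x^2-m*z^2)^n * (z/E z))) = 0 := by
    have hEeven : ∀ z : ℝ, E (-z) = E z := by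
      intro z; show Real.sqrt (1+(-z)^2) = Real.sqrt (1+z^2); rw [neg_sq]
    have h1 : ∀ z : ℝ, Cc * ((x^2-m*(-z)^2)^n * ((-z)/E (-z)))
        = -(Cc * ((x^2-m*z^2)^n * (z/E z))) := by
      intro z; rw [neg_sq, hEeven]; ring
    have h2 := integral_comp_neg (a := -S) (b := S)
      (fun z => Cc * ((x^2-m*z^2)^n * (z/E z)))
    simp only [h1, neg_neg] at h2
    rw [integral_neg] at h2
    linarith
  have heven : (∫ z in (-S)..S, Cc * (x^2-m*z^2)^n)
      = Cc * ((x^2)^n * (S * (∫ σ in (-1:ℝ)..1, (1-σ^2)^n))) := by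
    rw [integral_const_mul]
    congr 1
    have hcomp := integral_comp_mul_left (a := (-1:ℝ)) (b := 1)
      (c := S) (f := fun z => (x^2 - m*z^2)^n) hS.ne'
    have hptσ : ∀ σ : ℝ, (x^2 - m*(S*σ)^2)^n = (x^2)^n * (1-σ^2)^n := by
      intro σ; rw [← mul_pow]; congr 1; linear_combination (-(σ^2)) * hS2
    simp only [hptσ, mul_neg, mul_one, smul_eq_mul] at hcomp
    rw [integral_const_mul] at hcomp
    rw [eq_inv_mul_iff_mul_eq₀ hS.ne'] at hcomp
    rw [← hcomp]
    ring
  rw [← hsubst, hrw, integral_add hi1 hi2, hodd, heven, add_zero]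
  rw [hCc, hSdef, ← hsm2]
  field_simp
  rw [div_pow, mul_pow]
  field_simp
  ring

theorem stmt_1 (k : ℕ) (hk : 1 ≤ k) (R x : ℝ) (hR : 0 < R) (hx : 0 ≤ x) (hxR : x < R) :
    (∫ s in (-1:ℝ)..1, (1 - s^2)^(k-1) / (R^2 + x^2 + 2*R*x*s) ^ (2*k - 1)) ≥
      Real.sqrt π * Real.Gamma k / Real.Gamma (k + 1/2) / R ^ (4*k - 2) ∧
    ((∫ s in (-1:ℝ)..1, (1 - s^2)^(k-1) / (R^2 + x^2 + 2*R*x*s) ^ (2*k - 1)) =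
      Real.sqrt π * Real.Gamma k / Real.Gamma (k + 1/2) / R ^ (4*k - 2) ↔ x = 0) := by
  obtain ⟨n, rfl⟩ : ∃ n, k = n + 1 := ⟨k - 1, by omega⟩
  simp only [show n+1-1 = n from rfl, show 2*(n+1)-1 = 2*n+1 by omega,
    show 4*(n+1)-2 = 4*n+2 by omega]
  set c := ∫ s in (-1:ℝ)..1, (1 - s^2)^n with hc
  have hcpos : 0 < c := by
    rw [hc, cval]
    have h1 : 0 < Real.Gamma ((n:ℝ)+1) := Real.Gamma_pos_of_pos (by positivity)
    have h2 : 0 < Real.Gamma ((n:ℝ)+1+1/2) := Real.Gamma_pos_of_pos (by positivity)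
    have h3 : 0 < Real.sqrt π := Real.sqrt_pos.mpr Real.pi_pos
    positivity
  have hconst : Real.sqrt π * Real.Gamma ((n+1:ℕ)) / Real.Gamma (((n+1:ℕ)) + 1/2) / R^(4*n+2)
      = c * (R^(4*n+2))⁻¹ := by
    rw [hc, cval]
    push_cast
    ring
  rw [hconst]
  -- positivity of the quadratic form
  have hq : ∀ s ∈ Icc (-1:ℝ) 1, 0 < R^2 + x^2 + 2*R*x*s := by
    intro s hs
    have h1 : 0 < (R-x)^2 := by
      have : R - x > 0 := by linarith
      positivity
    have h2 : 0 ≤ 2*R*x*(1+s) := by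
      apply mul_nonneg (by positivity)
      linarith [hs.1]
    nlinarith
  rcases eq_or_lt_of_le hx with hx0 | hx0
  · -- x = 0 : equality
    have hxz : x = 0 := hx0.symm
    subst hxz
    have hval : (∫ s in (-1:ℝ)..1, (1 - s^2)^n / (R^2 + 0^2 + 2*R*0*s) ^ (2*n+1))
        = c * (R^(4*n+2))⁻¹ := by
      have e : ∀ s : ℝ, (1 - s^2)^n / (R^2 + 0^2 + 2*R*0*s) ^ (2*n+1)
          = (1 - s^2)^n * ((R^(4*n+2))⁻¹) := by
        intro s
        rw [show R^2 + 0^2 + 2*R*0*s = R^2 by ring, ← pow_mul,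
          show 2*(2*n+1) = 4*n+2 by omega, div_eq_mul_inv]
      simp_rw [e]
      rw [integral_mul_const]
    rw [hval]
    exact ⟨le_refl _, by simp⟩
  · -- x > 0 : strict inequality
    set μ : ℝ := -((n:ℝ)+1/2) with hμ
    set θ : ℝ := (R^(2*n+1))⁻¹ with hθ
    have hθpos : 0 < θ := by positivity
    have hA := meanval n R x hR hx0 hxR
    set q := fun s : ℝ => R^2 + x^2 + 2*R*x*s with hqdef
    -- pointwise identity : (q s)^μ squared = (q s ^ (2n+1))⁻¹
    have hsq : ∀ s ∈ Icc (-1:ℝ) 1, ((q s) ^ μ)^2 = ((q s)^(2*n+1))⁻¹ := by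
      intro s hs
      have hqs := hq s hs
      rw [sq, ← Real.rpow_add hqs, hμ]
      rw [show -((n:ℝ)+1/2) + -((n:ℝ)+1/2) = -(((2*n+1:ℕ)):ℝ) by push_cast; ring]
      rw [Real.rpow_neg hqs.le, Real.rpow_natCast]
    -- continuity facts
    have hqc : Continuous q := by rw [hqdef]; fun_prop
    have hqne : ∀ s ∈ Icc (-1:ℝ) 1, q s ≠ 0 := fun s hs => ne_of_gt (hq s hs)
    have hcont1 : ContinuousOn (fun s : ℝ => (1 - s^2)^n * (q s) ^ μ) (Icc (-1) 1) := by
      apply ContinuousOn.mul (by fun_prop)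
      exact ContinuousOn.rpow_const hqc.continuousOn (fun s hs => Or.inl (hqne s hs))
    have hcont2 : ContinuousOn (fun s : ℝ => (1 - s^2)^n / (q s) ^ (2*n+1)) (Icc (-1) 1) := by
      apply ContinuousOn.div (by fun_prop) (by fun_prop)
      exact fun s hs => pow_ne_zero _ (hqne s hs)
    have hcontf : ContinuousOn
        (fun s : ℝ => 2*θ*((1 - s^2)^n * (q s) ^ μ) - θ^2*(1 - s^2)^n) (Icc (-1) 1) := by
      apply ContinuousOn.sub (ContinuousOn.const_smul hcont1 (2*θ)) (by fun_prop)
    -- value of ∫ f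
    have hIf : (∫ s in (-1:ℝ)..1, (2*θ*((1 - s^2)^n * (q s) ^ μ) - θ^2*(1 - s^2)^n))
        = c * (R^(4*n+2))⁻¹ := by
      rw [integral_sub (((hcont1.intervalIntegrable_of_Icc (by norm_num)).const_mul (2*θ)))
        ((Continuous.intervalIntegrable (by fun_prop) _ _).const_mul (θ^2)),
        integral_const_mul, integral_const_mul, hA]
      rw [← hc, ← hθ]
      rw [show c * (R^(4*n+2))⁻¹ = c * θ^2 by
        rw [hθ, inv_pow, ← pow_mul, show (2*n+1)*2 = 4*n+2 by omega]]
      ring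
    -- pointwise inequality
    have hle : ∀ s ∈ Icc (-1:ℝ) 1,
        2*θ*((1 - s^2)^n * (q s) ^ μ) - θ^2*(1 - s^2)^n
          ≤ (1 - s^2)^n / (q s) ^ (2*n+1) := by
      intro s hs
      have hw : (0:ℝ) ≤ (1 - s^2)^n := by
        apply pow_nonneg
        nlinarith [hs.1, hs.2]
      have e : (1 - s^2)^n / (q s) ^ (2*n+1)
          - (2*θ*((1 - s^2)^n * (q s) ^ μ) - θ^2*(1 - s^2)^n)
          = (1 - s^2)^n * ((q s) ^ μ - θ)^2 := by
        rw [div_eq_mul_inv, ← hsq s hs]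
        ring
      nlinarith [mul_nonneg hw (sq_nonneg ((q s) ^ μ - θ))]
    -- strict at s = 0
    have hstrict : 2*θ*((1 - (0:ℝ)^2)^n * (q 0) ^ μ) - θ^2*(1 - (0:ℝ)^2)^n
        < (1 - (0:ℝ)^2)^n / (q 0) ^ (2*n+1) := by
      have h0 : (0:ℝ) ∈ Icc (-1:ℝ) 1 := by norm_num
      have hq0 : q 0 = R^2 + x^2 := by rw [hqdef]; ring
      have hsq0 := hsq 0 h0
      rw [hq0] at hsq0 ⊢
      have hlt : (R^2+x^2) ^ μ < θ := by
        have h1 : ((R:ℝ)^2) ^ μ = θ := by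
          rw [hμ, hθ, ← Real.rpow_natCast R 2, ← Real.rpow_mul hR.le]
          rw [show ((2:ℕ):ℝ) * -((n:ℝ)+1/2) = -(((2*n+1:ℕ)):ℝ) by push_cast; ring]
          rw [Real.rpow_neg hR.le, Real.rpow_natCast]
        rw [← h1]
        apply Real.rpow_lt_rpow_of_neg (by positivity) (by nlinarith) (by
          have hnn : (0:ℝ) ≤ (n:ℝ) := Nat.cast_nonneg n
          rw [hμ]; linarith)
      have hne : (R^2+x^2) ^ μ - θ ≠ 0 := sub_ne_zero.mpr (ne_of_lt hlt)
      have hsqpos : (0:ℝ) < ((R^2+x^2) ^ μ - θ)^2 := sq_pos_iff.mpr hne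
      have hone : ((1:ℝ) - 0^2)^n = 1 := by norm_num
      rw [hone, mul_one, one_mul, div_eq_mul_inv, one_mul, ← hsq0]
      nlinarith [hsqpos]
    have hmain : c * (R^(4*n+2))⁻¹ < ∫ s in (-1:ℝ)..1, (1 - s^2)^n / (q s) ^ (2*n+1) := by
      rw [← hIf]
      exact integral_lt_integral_of_continuousOn_of_le_of_exists_lt (by norm_num)
        hcontf hcont2 (fun s hs => hle s (Ioc_subset_Icc_self hs))
        ⟨0, by norm_num, hstrict⟩
    constructor
    · exact le_of_lt hmain
    · constructor
      · intro h; exfalso; rw [h] at hmain; exact lt_irrefl _ hmain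
      · intro h; exact absurd h (ne_of_gt hx0)
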